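/- The state category C_n of the Petri net N_n (the pipeline net on transitions t₂,…,t_n with places p₁,…,p_{n-1}, obtained from the pipeline net by deleting t₁) is a partially ordered set having a least element 11⋯1 and a greatest element 00⋯0: for any two states x, y there is at most one trace μ with x·μ = y, and x·μ = y together with y·ν = x forces μ = ν = 1. -/

import Mathlib

/-! Concrete pipeline Petri nets. States of a net with `m` places are `Fin m → Bool`. -/

/-- The "tail" pipeline net `N` with `m` places `p₁,…,p_m` (0-indexed `0,…,m-1`) and `m`
events `t₂,…,t_{m+1}` (0-indexed: event `j` is `t_{j+2}` with `pre = {p_{j+1}}`, i.e. place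
`j`, and `post = {p_{j+2}}`, i.e. place `j+1`, when `j+1 < m`, and `post = ∅` for the last
event).  `stepT m s e` is the partial firing of event `e` at state `s`. -/
def stepT (m : ℕ) (s : Fin m → Bool) (e : Fin m) : Option (Fin m → Bool) :=
  if s e = true then
    if h : (e : ℕ) + 1 < m then
      if s ⟨(e : ℕ) + 1, h⟩ = false then
        some (Function.update (Function.update s e false) ⟨(e : ℕ) + 1, h⟩ true)
      else none
    else some (Function.update s e false)
  else none

/-- Firing a word (list) of events, `s · (a :: l) = (s · a) · l`. -/
def stepsT (m : ℕ) : (Fin m → Bool) → List (Fin m) → Option (Fin m → Bool)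
  | s, [] => some s
  | s, a :: l => (stepT m s a).bind fun s' => stepsT m s' l

/-- Resources (`pre ∪ post`, as a set of 0-indexed places) of event `e` of the tail net. -/
def resT (m : ℕ) (e : Fin m) : Set ℕ :=
  {x | x = (e : ℕ) ∨ (x = (e : ℕ) + 1 ∧ (e : ℕ) + 1 < m)}

/-- Independence of events of the tail net: disjoint resources. -/
def indepT (m : ℕ) (a b : Fin m) : Prop :=
  ∀ x, ¬(x ∈ resT m a ∧ x ∈ resT m b)

/-- One swap of adjacent independent letters in a word. -/
inductive TraceStep {E : Type} (r : E → E → Prop) : List E → List E → Prop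
  | swap (u v : List E) (a b : E) : r a b →
      TraceStep r (u ++ a :: b :: v) (u ++ b :: a :: v)

/-- Trace equivalence: two words represent the same element of the trace monoid `M(E,I)`
iff they are related by the equivalence closure of adjacent swaps of independent letters. -/
def TraceEquiv {E : Type} (r : E → E → Prop) : List E → List E → Prop :=
  Relation.EqvGen (TraceStep r)

namespace PN

variable {m : ℕ}

def fire (s : Fin m → Bool) (e : Fin m) : Fin m → Bool :=
  fun i => if i = e then false else if (i : ℕ) = (e : ℕ) + 1 then true else s i

def Enb (s : Fin m → Bool) (e : Fin m) : Prop :=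
  s e = true ∧ ∀ h : (e : ℕ) + 1 < m, s ⟨(e : ℕ) + 1, h⟩ = false

lemma fire_eq_of_lt {s : Fin m → Bool} {e : Fin m} (h : (e:ℕ)+1 < m) :
    Function.update (Function.update s e false) ⟨(e:ℕ)+1, h⟩ true = fire s e := by
  funext i
  simp only [Function.update_apply, fire, Fin.ext_iff]
  split_ifs <;> simp_all <;> omega

lemma fire_eq_of_ge {s : Fin m → Bool} {e : Fin m} (h : ¬ (e:ℕ)+1 < m) :
    Function.update s e false = fire s e := by
  funext i
  have hi := i.isLt
  simp only [Function.update_apply, fire, Fin.ext_iff]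
  split_ifs <;> simp_all <;> omega

lemma stepT_eq_some_iff {s s' : Fin m → Bool} {e : Fin m} :
    stepT m s e = some s' ↔ Enb s e ∧ s' = fire s e := by
  unfold stepT Enb
  cases hse : s e
  · simp
  · by_cases h1 : (e : ℕ) + 1 < m
    · cases hs1 : s ⟨(e:ℕ)+1, h1⟩
      · simp only [if_pos rfl, dif_pos h1, if_pos hs1, fire_eq_of_lt h1]
        constructor
        · rintro h; exact ⟨⟨by trivial, fun _ => hs1⟩, (Option.some.injEq _ _ ▸ h).symm⟩
        · rintro ⟨_, rfl⟩; rfl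
      · simp only [if_pos rfl, dif_pos h1, hs1]
        constructor
        · intro h; simp at h
        · rintro ⟨⟨_, h⟩, _⟩; exact absurd (h h1) (by simp [hs1])
    · simp only [if_pos rfl, dif_neg h1, fire_eq_of_ge h1]
      constructor
      · rintro h; exact ⟨⟨by trivial, fun hh => absurd hh h1⟩, (Option.some.injEq _ _ ▸ h).symm⟩
      · rintro ⟨_, rfl⟩; rfl


lemma indep_iff {a b : Fin m} :
    indepT m a b ↔ (a:ℕ) ≠ b ∧ (a:ℕ) ≠ (b:ℕ)+1 ∧ (b:ℕ) ≠ (a:ℕ)+1 := by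
  have ha := a.isLt; have hb := b.isLt
  simp only [indepT, resT, Set.mem_setOf_eq]
  constructor
  · intro h
    have h1 := h (a:ℕ); have h2 := h (b:ℕ)
    constructor
    · intro he; omega
    constructor
    · intro he; omega
    · intro he; omega
  · intro h x; omega

lemma enb_indep {s s₁ s₂ : Fin m → Bool} {a b : Fin m}
    (h₁ : stepT m s a = some s₁) (h₂ : stepT m s b = some s₂) (hne : a ≠ b) :
    indepT m a b := by
  rw [stepT_eq_some_iff] at h₁ h₂
  obtain ⟨⟨ha, ha'⟩, -⟩ := h₁
  obtain ⟨⟨hb, hb'⟩, -⟩ := h₂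
  rw [indep_iff]
  have hA := a.isLt; have hB := b.isLt
  refine ⟨fun h => hne (Fin.ext h), fun h => ?_, fun h => ?_⟩
  · have hlt : (b:ℕ)+1 < m := h ▸ hA
    have := hb' hlt
    have : s a = false := by
      have : (⟨(b:ℕ)+1, hlt⟩ : Fin m) = a := Fin.ext (by simpa using h.symm)
      rw [← this]; exact hb' hlt
    simp [this] at ha
  · have hlt : (a:ℕ)+1 < m := h ▸ hB
    have : s b = false := by
      have : (⟨(a:ℕ)+1, hlt⟩ : Fin m) = b := Fin.ext (by simpa using h.symm)
      rw [← this]; exact ha' hlt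
    simp [this] at hb

lemma fire_comm {s : Fin m → Bool} {a b : Fin m} (h : indepT m a b) :
    fire (fire s a) b = fire (fire s b) a := by
  rw [indep_iff] at h
  funext i
  simp only [fire, Fin.ext_iff]
  split_ifs <;> first | rfl | omega

lemma fire_apply_other {s : Fin m → Bool} {a : Fin m} {i : Fin m}
    (h1 : (i:ℕ) ≠ (a:ℕ)) (h2 : (i:ℕ) ≠ (a:ℕ)+1) : fire s a i = s i := by
  simp only [fire]
  rw [if_neg (fun he => h1 (Fin.ext_iff.1 he)), if_neg h2]

lemma enb_fire {s : Fin m → Bool} {a b : Fin m} (h : indepT m a b) :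
    Enb (fire s a) b ↔ Enb s b := by
  rw [indep_iff] at h
  have e1 : fire s a b = s b := fire_apply_other (fun he => h.1 he.symm) h.2.2
  unfold Enb
  rw [e1]
  refine and_congr_right fun _ => ?_
  refine forall_congr' fun hlt => ?_
  have e2 : fire s a ⟨(b:ℕ)+1, hlt⟩ = s ⟨(b:ℕ)+1, hlt⟩ :=
    fire_apply_other (fun he => h.2.1 (by simpa using he.symm)) (by simp; omega)
  rw [e2]

lemma diamond {a b : Fin m} (hab : indepT m a b) {s s₁ s₂ : Fin m → Bool}
    (h₁ : stepT m s a = some s₁) (h₂ : stepT m s b = some s₂) :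
    ∃ w, stepT m s₁ b = some w ∧ stepT m s₂ a = some w := by
  have hba : indepT m b a := fun x hx => hab x ⟨hx.2, hx.1⟩
  rw [stepT_eq_some_iff] at h₁ h₂
  obtain ⟨ea, rfl⟩ := h₁
  obtain ⟨eb, rfl⟩ := h₂
  refine ⟨fire (fire s a) b, ?_, ?_⟩
  · rw [stepT_eq_some_iff]
    exact ⟨(enb_fire hab).2 eb, rfl⟩
  · rw [stepT_eq_some_iff]
    exact ⟨(enb_fire hba).2 ea, fire_comm hab⟩

lemma steps_cons_some {x y : Fin m → Bool} {a : Fin m} {l : List (Fin m)} :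
    stepsT m x (a :: l) = some y ↔ ∃ t, stepT m x a = some t ∧ stepsT m t l = some y := by
  cases h : stepT m x a <;> simp [stepsT, h]

lemma steps_append {x : Fin m → Bool} {l₁ l₂ : List (Fin m)} :
    stepsT m x (l₁ ++ l₂) = (stepsT m x l₁).bind fun t => stepsT m t l₂ := by
  induction l₁ generalizing x with
  | nil => simp [stepsT]
  | cons a l ih =>
    simp only [List.cons_append, stepsT]
    cases h : stepT m x a <;> simp [ih]

lemma sum_comp_update (g : Fin m → Bool → ℕ) (s : Fin m → Bool) (j : Fin m) (b : Bool) :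
    (∑ i, g i (Function.update s j b i)) + g j (s j) = (∑ i, g i (s i)) + g j b := by
  have h : (fun i => g i (Function.update s j b i)) =
      Function.update (fun i => g i (s i)) j (g j b) := by
    funext i
    rcases eq_or_ne i j with rfl | hij
    · simp
    · simp [Function.update_of_ne hij]
  rw [h, Finset.sum_update_of_mem (Finset.mem_univ j)]
  rw [← Finset.sum_erase_add Finset.univ _ (Finset.mem_univ j), Finset.sdiff_singleton_eq_erase]
  ring

def W (s : Fin m → Bool) : ℕ := ∑ i : Fin m, if s i then m - (i:ℕ) else 0

lemma W_step {s s' : Fin m → Bool} {e : Fin m} (h : stepT m s e = some s') :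
    W s = W s' + 1 := by
  rw [stepT_eq_some_iff] at h
  obtain ⟨⟨he, he'⟩, rfl⟩ := h
  have hlt := e.isLt
  set g : Fin m → Bool → ℕ := fun i b => if b then m - (i:ℕ) else 0 with hg
  by_cases h1 : (e:ℕ)+1 < m
  · rw [← fire_eq_of_lt h1]
    have k1 := sum_comp_update g (Function.update s e false) ⟨(e:ℕ)+1, h1⟩ true
    have k2 := sum_comp_update g s e false
    have hv : Function.update s e false ⟨(e:ℕ)+1, h1⟩ = s ⟨(e:ℕ)+1, h1⟩ := by
      apply Function.update_of_ne; simp [Fin.ext_iff]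
    rw [hv, he' h1] at k1
    rw [he] at k2
    simp only [hg, Fin.val_mk, if_pos rfl] at k1 k2
    norm_num at k1 k2
    unfold W
    omega
  · rw [← fire_eq_of_ge h1]
    have k2 := sum_comp_update g s e false
    rw [he] at k2
    simp only [hg, if_pos rfl] at k2
    norm_num at k2
    unfold W
    omega

lemma W_steps {x y : Fin m → Bool} {l : List (Fin m)} (h : stepsT m x l = some y) :
    W x = W y + l.length := by
  induction l generalizing x with
  | nil => simp [stepsT] at h; subst h; simp
  | cons a l ih =>
    obtain ⟨t, h1, h2⟩ := steps_cons_some.1 h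
    have := W_step h1
    have := ih h2
    simp only [List.length_cons]
    omega

def cnt (p : Fin m) (s : Fin m → Bool) : ℕ := ∑ i : Fin m, if i ≤ p ∧ s i = true then 1 else 0

lemma cnt_step {s s' : Fin m → Bool} {e p : Fin m} (h : stepT m s e = some s') :
    cnt p s = cnt p s' + (if e = p then 1 else 0) := by
  rw [stepT_eq_some_iff] at h
  obtain ⟨⟨he, he'⟩, rfl⟩ := h
  have hlt := e.isLt
  have hp := p.isLt
  set g : Fin m → Bool → ℕ := fun i b => if i ≤ p ∧ b = true then 1 else 0 with hg
  by_cases h1 : (e:ℕ)+1 < m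
  · rw [← fire_eq_of_lt h1]
    have k1 := sum_comp_update g (Function.update s e false) ⟨(e:ℕ)+1, h1⟩ true
    have k2 := sum_comp_update g s e false
    have hv : Function.update s e false ⟨(e:ℕ)+1, h1⟩ = s ⟨(e:ℕ)+1, h1⟩ := by
      apply Function.update_of_ne; simp [Fin.ext_iff]
    rw [hv, he' h1] at k1
    rw [he] at k2
    unfold cnt
    simp only [hg, Fin.le_def, Fin.ext_iff, Fin.val_mk, Bool.false_eq_true, and_false,
      and_true, if_false] at k1 k2 ⊢
    split_ifs at k1 k2 ⊢ <;> omega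
  · rw [← fire_eq_of_ge h1]
    have k2 := sum_comp_update g s e false
    rw [he] at k2
    unfold cnt
    simp only [hg, Fin.le_def, Fin.ext_iff, Fin.val_mk, Bool.false_eq_true, and_false,
      and_true, if_false] at k2 ⊢
    split_ifs at k2 ⊢ <;> omega

lemma cnt_steps {x y : Fin m → Bool} {l : List (Fin m)} {p : Fin m} (h : stepsT m x l = some y) :
    cnt p x = cnt p y + l.count p := by
  induction l generalizing x with
  | nil => simp [stepsT] at h; subst h; simp
  | cons a l ih =>
    obtain ⟨t, h1, h2⟩ := steps_cons_some.1 h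
    have hs := cnt_step (p := p) h1
    have ht := ih h2
    simp only [List.count_cons, beq_iff_eq]
    by_cases hd : a = p
    · subst hd; simp at hs ⊢; omega
    · have hd' : ¬ (p = a) := fun hh => hd hh.symm
      simp only [if_neg hd, if_neg hd'] at hs ⊢
      omega

lemma trace_refl {E : Type} (r : E → E → Prop) (l : List E) : TraceEquiv r l l :=
  Relation.EqvGen.refl l

lemma trace_symm {E : Type} {r : E → E → Prop} {l l' : List E}
    (h : TraceEquiv r l l') : TraceEquiv r l' l := Relation.EqvGen.symm _ _ h

lemma trace_trans {E : Type} {r : E → E → Prop} {l₁ l₂ l₃ : List E}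
    (h : TraceEquiv r l₁ l₂) (h' : TraceEquiv r l₂ l₃) : TraceEquiv r l₁ l₃ :=
  Relation.EqvGen.trans _ _ _ h h'

lemma trace_cons {E : Type} {r : E → E → Prop} {l l' : List E} (a : E)
    (h : TraceEquiv r l l') : TraceEquiv r (a :: l) (a :: l') := by
  induction h with
  | rel x y hxy =>
    cases hxy with
    | swap u v b c hbc =>
      exact Relation.EqvGen.rel _ _ (TraceStep.swap (a :: u) v b c hbc)
  | refl x => exact Relation.EqvGen.refl _
  | symm x y _ ih => exact Relation.EqvGen.symm _ _ ih
  | trans x y z _ _ ih₁ ih₂ => exact Relation.EqvGen.trans _ _ _ ih₁ ih₂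

lemma trace_swap_head {E : Type} {r : E → E → Prop} (a b : E) (l : List E) (h : r a b) :
    TraceEquiv r (a :: b :: l) (b :: a :: l) :=
  Relation.EqvGen.rel _ _ (TraceStep.swap [] l a b h)

lemma bubble : ∀ (u : List (Fin m)) {s z y : Fin m → Bool} {b : Fin m} {v : List (Fin m)},
    stepT m s b = some z → stepsT m s (u ++ b :: v) = some y → b ∉ u →
    TraceEquiv (indepT m) (u ++ b :: v) (b :: (u ++ v)) ∧ stepsT m z (u ++ v) = some y := by
  intro u
  induction u with
  | nil =>
    intro s z y b v hb hrun _
    obtain ⟨t, ht, ht'⟩ := steps_cons_some.1 hrun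
    rw [hb] at ht
    cases ht
    exact ⟨trace_refl _ _, ht'⟩
  | cons c u' ih =>
    intro s z y b v hb hrun hbu
    have hcb : c ≠ b := fun hh => hbu (hh ▸ List.mem_cons_self (a := c) (l := u'))
    have hbu' : b ∉ u' := fun hh => hbu (List.mem_cons_of_mem _ hh)
    obtain ⟨s₁, hsc, hrun'⟩ := steps_cons_some.1 hrun
    have hind : indepT m c b := enb_indep hsc hb hcb
    obtain ⟨w, hw1, hw2⟩ := diamond hind hsc hb
    obtain ⟨htr, hwy⟩ := ih hw1 hrun' hbu'
    constructor
    · refine trace_trans (trace_cons c htr) ?_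
      exact trace_swap_head c b (u' ++ v) hind
    · exact steps_cons_some.2 ⟨w, hw2, hwy⟩

lemma mem_split_first {α : Type} [DecidableEq α] {a : α} :
    ∀ {l : List α}, a ∈ l → ∃ u v, l = u ++ a :: v ∧ a ∉ u := by
  intro l
  induction l with
  | nil => intro h; cases h
  | cons c l' ih =>
    intro h
    by_cases hca : a = c
    · exact ⟨[], l', by simp [hca], by simp⟩
    · have : a ∈ l' := by
        rcases List.mem_cons.1 h with h1 | h1
        · exact absurd h1 hca
        · exact h1
      obtain ⟨u, v, rfl, hau⟩ := ih this
      exact ⟨c :: u, v, rfl, by simp [hau, hca]⟩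

lemma uniq : ∀ (k : ℕ) (l₁ : List (Fin m)), l₁.length ≤ k →
    ∀ (x y : Fin m → Bool) (l₂ : List (Fin m)),
    stepsT m x l₁ = some y → stepsT m x l₂ = some y → TraceEquiv (indepT m) l₁ l₂ := by
  intro k
  induction k with
  | zero =>
    intro l₁ hlen x y l₂ h₁ h₂
    have hl₁ : l₁ = [] := List.length_eq_zero_iff.1 (Nat.le_zero.1 hlen)
    subst hl₁
    have hxy : x = y := by simpa [stepsT] using h₁
    subst hxy
    have := W_steps h₂
    have hl₂ : l₂ = [] := List.length_eq_zero_iff.1 (by omega)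
    subst hl₂
    exact trace_refl _ _
  | succ k ih =>
    intro l₁ hlen x y l₂ h₁ h₂
    match l₁, l₂ with
    | [], l₂ =>
      have hxy : x = y := by simpa [stepsT] using h₁
      subst hxy
      have := W_steps h₂
      have hl₂ : l₂ = [] := List.length_eq_zero_iff.1 (by omega)
      subst hl₂
      exact trace_refl _ _
    | a :: l₁', [] =>
      have hxy : x = y := by simpa [stepsT] using h₂
      subst hxy
      have := W_steps h₁
      simp at this
    | a :: l₁', b :: l₂' =>
      obtain ⟨x₁, hx1, h₁'⟩ := steps_cons_some.1 h₁
      obtain ⟨x₂, hx2, h₂'⟩ := steps_cons_some.1 h₂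
      by_cases hab : a = b
      · subst hab
        rw [hx1] at hx2
        cases hx2
        exact trace_cons a (ih l₁' (by simpa using hlen) _ _ _ h₁' h₂')
      · -- b occurs in l₁'
        have hc1 : cnt b x = cnt b y + (a :: l₁').count b := cnt_steps h₁
        have hc2 : cnt b x = cnt b y + (b :: l₂').count b := cnt_steps h₂
        have hcnt2 : (b :: l₂').count b = l₂'.count b + 1 := by simp [List.count_cons]
        have hne' : ¬ (b = a) := fun hh => hab hh.symm
        have hcnt1 : (a :: l₁').count b = l₁'.count b := by
          simp [List.count_cons, hab, hne']
        have hbmem : b ∈ l₁' := by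
          rw [← List.count_pos_iff]
          omega
        obtain ⟨u, v, rfl, hbu⟩ := mem_split_first hbmem
        have hind : indepT m a b := enb_indep hx1 hx2 hab
        obtain ⟨w, hw1, hw2⟩ := diamond hind hx1 hx2
        obtain ⟨htr, hwy⟩ := bubble u hw1 h₁' hbu
        have hrun2 : stepsT m x₂ (a :: (u ++ v)) = some y := steps_cons_some.2 ⟨w, hw2, hwy⟩
        have hlen' : (a :: (u ++ v)).length ≤ k := by
          simp at hlen ⊢
          omega
        have hend : TraceEquiv (indepT m) (a :: (u ++ v)) l₂' := ih _ hlen' _ _ _ hrun2 h₂'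
        refine trace_trans (trace_cons a htr) ?_
        refine trace_trans (trace_swap_head a b (u ++ v) hind) ?_
        exact trace_cons b hend

lemma W_le_ones (s : Fin m → Bool) : W s ≤ W (fun _ => true : Fin m → Bool) := by
  unfold W
  apply Finset.sum_le_sum
  intro i _
  split_ifs <;> simp_all

lemma W_lt_ones {s : Fin m → Bool} (h : s ≠ (fun _ => true)) :
    W s < W (fun _ => true : Fin m → Bool) := by
  have : ∃ i, s i = false := by
    by_contra hc
    push_neg at hc
    exact h (funext fun i => by have := hc i; cases hsi : s i <;> simp_all)
  obtain ⟨i, hi⟩ := this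
  unfold W
  apply Finset.sum_lt_sum
  · intro j _; split_ifs <;> simp_all
  · exact ⟨i, Finset.mem_univ i, by simp [hi]⟩

lemma reach_zero : ∀ (k : ℕ) (x : Fin m → Bool), W x ≤ k →
    ∃ l, stepsT m x l = some (fun _ => false) := by
  intro k
  induction k with
  | zero =>
    intro x hx
    have hW : W x = 0 := Nat.le_zero.1 hx
    have : x = (fun _ => false) := by
      funext i
      by_contra hc
      have hxi : x i = true := by cases hxi : x i <;> simp_all
      have hpos : 0 < W x := by
        unfold W
        apply Finset.sum_pos'
        · intro j _; positivity
        · exact ⟨i, Finset.mem_univ i, by simp [hxi]⟩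
      omega
    exact ⟨[], by simp [stepsT, this]⟩
  | succ k ih =>
    intro x hx
    by_cases hx0 : x = (fun _ => false)
    · exact ⟨[], by simp [stepsT, hx0]⟩
    · have hne : ∃ i, x i = true := by
        by_contra hc
        push_neg at hc
        exact hx0 (funext fun i => by have := hc i; cases hxi : x i <;> simp_all)
      set F := Finset.univ.filter (fun i : Fin m => x i = true) with hF
      have hFne : F.Nonempty := by
        obtain ⟨i, hi⟩ := hne
        exact ⟨i, by simp [hF, hi]⟩
      set e := F.max' hFne with he
      have hxe : x e = true := by
        have := F.max'_mem hFne
        simpa [hF] using this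
      have henb : Enb x e := by
        refine ⟨hxe, fun hlt => ?_⟩
        by_contra hc
        have hmem : (⟨(e:ℕ)+1, hlt⟩ : Fin m) ∈ F := by
          simp [hF]
          cases hv : x ⟨(e:ℕ)+1, hlt⟩ <;> simp_all
        have := F.le_max' _ hmem
        rw [Fin.le_def] at this
        simp [Fin.val_mk] at this
        exact lt_irrefl _ (lt_of_lt_of_eq this he.symm)
      have hstep : stepT m x e = some (fire x e) := stepT_eq_some_iff.2 ⟨henb, rfl⟩
      have hW := W_step hstep
      obtain ⟨l, hl⟩ := ih (fire x e) (by omega)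
      exact ⟨e :: l, steps_cons_some.2 ⟨_, hstep, hl⟩⟩

lemma reach_ones : ∀ (k : ℕ) (x : Fin m → Bool),
    W (fun _ => true : Fin m → Bool) - W x ≤ k →
    ∃ l, stepsT m (fun _ => true : Fin m → Bool) l = some x := by
  intro k
  induction k with
  | zero =>
    intro x hx
    have : x = (fun _ => true) := by
      by_contra hc
      have := W_lt_ones hc
      omega
    exact ⟨[], by simp [stepsT, this]⟩
  | succ k ih =>
    intro x hx
    by_cases hx1 : x = (fun _ => true)
    · exact ⟨[], by simp [stepsT, hx1]⟩
    · have hne : ∃ i, x i = false := by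
        by_contra hc
        push_neg at hc
        exact hx1 (funext fun i => by have := hc i; cases hxi : x i <;> simp_all)
      set F := Finset.univ.filter (fun i : Fin m => x i = false) with hF
      have hFne : F.Nonempty := by
        obtain ⟨i, hi⟩ := hne
        exact ⟨i, by simp [hF, hi]⟩
      set e := F.max' hFne with he
      have hxe : x e = false := by
        have := F.max'_mem hFne
        simpa [hF] using this
      have hmax : ∀ j : Fin m, (e:ℕ) < (j:ℕ) → x j = true := by
        intro j hj
        by_contra hc
        have hxj : x j = false := by cases hv : x j <;> simp_all
        have hmem : j ∈ F := by simp [hF, hxj]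
        have := F.le_max' _ hmem
        rw [Fin.le_def] at this
        omega
      by_cases h1 : (e:ℕ)+1 < m
      · set x' := Function.update (Function.update x e true) ⟨(e:ℕ)+1, h1⟩ false with hx'
        have hv1 : x' e = true := by
          rw [hx', Function.update_of_ne (by simp [Fin.ext_iff]), Function.update_self]
        have hv2 : x' ⟨(e:ℕ)+1, h1⟩ = false := by rw [hx', Function.update_self]
        have henb : Enb x' e := ⟨hv1, fun _ => hv2⟩
        have hfx : fire x' e = x := by
          funext i
          rcases eq_or_ne i e with rfl | hie
          · simp [fire, hxe]
          · by_cases hie1 : (i:ℕ) = (e:ℕ)+1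
            · have : i = (⟨(e:ℕ)+1, h1⟩ : Fin m) := Fin.ext (by simpa using hie1)
              subst this
              simp only [fire]
              rw [if_neg hie, if_pos (by simp)]
              exact (hmax _ (by simp [Fin.val_mk])).symm
            · simp only [fire]
              rw [if_neg hie, if_neg hie1, hx',
                Function.update_of_ne (by simp [Fin.ext_iff]; omega),
                Function.update_of_ne hie]
        have hstep : stepT m x' e = some x := stepT_eq_some_iff.2 ⟨henb, hfx.symm⟩
        have hW := W_step hstep
        have hle := W_le_ones (m := m) x'
        obtain ⟨l, hl⟩ := ih x' (by omega)
        refine ⟨l ++ [e], ?_⟩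
        rw [steps_append, hl]
        simp [stepsT, hstep]
      · set x' := Function.update x e true with hx'
        have hv1 : x' e = true := by rw [hx', Function.update_self]
        have henb : Enb x' e := ⟨hv1, fun hh => absurd hh h1⟩
        have hfx : fire x' e = x := by
          funext i
          rcases eq_or_ne i e with rfl | hie
          · simp [fire, hxe]
          · have hie1 : (i:ℕ) ≠ (e:ℕ)+1 := by have := i.isLt; omega
            simp only [fire]
            rw [if_neg hie, if_neg hie1, hx', Function.update_of_ne hie]
        have hstep : stepT m x' e = some x := stepT_eq_some_iff.2 ⟨henb, hfx.symm⟩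
        have hW := W_step hstep
        have hle := W_le_ones (m := m) x'
        obtain ⟨l, hl⟩ := ih x' (by omega)
        refine ⟨l ++ [e], ?_⟩
        rw [steps_append, hl]
        simp [stepsT, hstep]

end PN

/-- The state category `C_n` of the net `N_n` (the pipeline net on transitions `t₂,…,t_n`
with places `p₁,…,p_{n-1}`, here with `m = n-1` places and events) is a partially ordered
set with least element `11⋯1` and greatest element `00⋯0`: between any two states there is
at most one trace (any two words realizing `x → y` are trace equivalent), the resulting
preorder is antisymmetric (mutually reachable states coincide, with both traces trivial),
`11⋯1` reaches every state and every state reaches `00⋯0`. -/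


theorem pipeline_state_category_is_poset (n : ℕ) (hn : 2 ≤ n) :
    (∀ (x y : Fin (n - 1) → Bool) (l₁ l₂ : List (Fin (n - 1))),
        stepsT (n - 1) x l₁ = some y → stepsT (n - 1) x l₂ = some y →
        TraceEquiv (indepT (n - 1)) l₁ l₂) ∧
    (∀ (x y : Fin (n - 1) → Bool) (l l' : List (Fin (n - 1))),
        stepsT (n - 1) x l = some y → stepsT (n - 1) y l' = some x →
        l = [] ∧ l' = []) ∧
    (∀ x : Fin (n - 1) → Bool, ∃ l, stepsT (n - 1) (fun _ => true) l = some x) ∧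
    (∀ x : Fin (n - 1) → Bool, ∃ l, stepsT (n - 1) x l = some (fun _ => false)) := by
  refine ⟨?_, ?_, ?_, ?_⟩
  · intro x y l₁ l₂ h₁ h₂
    exact PN.uniq l₁.length l₁ le_rfl x y l₂ h₁ h₂
  · intro x y l l' h h'
    have h1 := PN.W_steps h
    have h2 := PN.W_steps h'
    constructor
    · exact List.length_eq_zero_iff.1 (by omega)
    · exact List.length_eq_zero_iff.1 (by omega)
  · intro x
    exact PN.reach_ones _ x le_rfl
  · intro x
    exact PN.reach_zero (PN.W x) x le_rfl
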